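/- Let n, r, s be nonnegative integers, let a, b, c, p, x ∈ ℂ and a₁,…,a_r, b₁,…,b_s ∈ ℂ. Assume bc − p(a−p) ≠ 0 and set γ = p(a−p)(b+c−a)/(bc − p(a−p)). Assume the parameters are nondegenerate for the identity below. Then the terminating sum ᵣ₊₆Fₛ₊₄(a, b, c, a−p+1, p+1, a₁,…,a_r, −n; 1+a−b, 1+a−c, p, a−p, b₁,…,b_s; x) equals Σ_{m=0}^{n} [ (a/2)_m ((a+1)/2)_m (a−b−c)_m (γ+1)_m (a₁)_m⋯(a_r)_m (−n)_m (−4x)^m / ( m! (1+a−b)_m (1+a−c)_m (γ)_m (b₁)_m⋯(b_s)_m ) ] · ᵣ₊₂Fₛ(a+2m, a₁+m, …, a_r+m, −(n−m); b₁+m, …, b_s+m; x). -/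

import Mathlib

/-- Rising factorial (Pochhammer symbol) `(a)ₖ = a(a+1)⋯(a+k−1)`. -/
noncomputable def poch (a : ℂ) (k : ℕ) : ℂ := (ascPochhammer ℂ k).eval a

/-- Terminating hypergeometric sum with numerator parameters `A` together with
the extra top parameter `-n`, denominator parameters `B`, and argument `x`. -/
noncomputable def hypTerm (A B : List ℂ) (n : ℕ) (x : ℂ) : ℂ :=
  ∑ k ∈ Finset.range (n + 1),
    ((A.map fun a => poch a k).prod * poch (-(n : ℂ)) k) /
      ((k.factorial : ℂ) * (B.map fun b => poch b k).prod) * x ^ k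

lemma poch_zero (a : ℂ) : poch a 0 = 1 := by simp [poch]
lemma poch_one (a : ℂ) : poch a 1 = a := by simp [poch]
lemma poch_succ (a : ℂ) (k : ℕ) : poch a (k + 1) = poch a k * (a + k) := by
  simp [poch, ascPochhammer_succ_right]
lemma poch_succ_left (a : ℂ) (k : ℕ) : poch a (k + 1) = a * poch (a + 1) k := by
  simp [poch, ascPochhammer_succ_left]
lemma poch_add (a : ℂ) (m k : ℕ) : poch a (m + k) = poch a m * poch (a + m) k := by
  induction k with
  | zero => simp [poch_zero]
  | succ k ih => rw [← Nat.add_assoc, poch_succ, ih, poch_succ]; push_cast; ring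

lemma poch_reflect (a : ℂ) (k : ℕ) : poch a k = (-1) ^ k * poch (1 - a - k) k := by
  induction k generalizing a with
  | zero => simp [poch_zero]
  | succ k ih =>
      rw [poch_succ, ih (a := a), poch_succ_left,
        show (1:ℂ) - a - ((k+1:ℕ):ℂ) + 1 = 1 - a - k by push_cast; ring]
      push_cast; ring

lemma poch_doubling (a : ℂ) (m : ℕ) :
    poch (a/2) m * poch ((a+1)/2) m * 4 ^ m = poch a (2 * m) := by
  induction m with
  | zero => simp [poch_zero]
  | succ m ih =>
      rw [show 2 * (m+1) = 2*m + 1 + 1 by ring, poch_succ, poch_succ, poch_succ, poch_succ, ← ih]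
      push_cast; ring

lemma poch_mono_ne_zero {a : ℂ} {m k : ℕ} (h : m ≤ k) (hk : poch a k ≠ 0) : poch a m ≠ 0 := by
  intro h0
  rw [show k = m + (k - m) by omega, poch_add, h0, zero_mul] at hk
  exact hk rfl

lemma poch_contig (a : ℂ) (m : ℕ) : a * poch (a + 1) m = poch a m * (a + m) := by
  induction m with
  | zero => simp [poch_zero]
  | succ m ih => rw [poch_succ, poch_succ, ← mul_assoc, ih]; push_cast; ring

lemma vandermonde (N : ℕ) : ∀ b c : ℂ,
    ∑ m ∈ Finset.range (N + 1), (-1) ^ m * (N.choose m : ℂ) * poch b m * poch (c + m) (N - m)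
      = poch (c - b) N := by
  induction N with
  | zero => intro b c; simp [poch_zero]
  | succ N ih =>
      intro b c
      have key : ∀ m ∈ Finset.range (N + 2),
          (-1) ^ m * ((N+1).choose m : ℂ) * poch b m * poch (c + m) (N + 1 - m)
          = ((-1) ^ m * (N.choose m : ℂ) * poch b m * poch (c + m) (N - m)) * (c + N)
            + (if m = 0 then 0 else
              (-1) ^ m * (N.choose (m-1) : ℂ) * poch b m * poch (c + m) (N + 1 - m)) := by
        intro m hm
        simp only [Finset.mem_range] at hm
        match m with
        | 0 =>
            simp only [if_pos rfl, add_zero, Nat.choose_zero_right, poch_zero, Nat.sub_zero]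
            rw [show N + 1 = N + 1 from rfl, poch_succ]
            push_cast; ring
        | (j+1) =>
            simp only [if_neg (Nat.succ_ne_zero j), Nat.add_sub_cancel]
            rw [Nat.choose_succ_succ]
            by_cases h : j + 1 ≤ N
            · rw [show N + 1 - (j+1) = (N - (j+1)) + 1 from by omega,
                poch_succ (c + (((j+1):ℕ):ℂ)) (N - (j+1)),
                show ((c + (((j+1):ℕ):ℂ)) + ((N - (j+1) : ℕ):ℂ)) = c + N from by
                  push_cast [Nat.cast_sub h]; ring]
              push_cast; ring
            · have h1 : N.choose (j+1) = 0 := Nat.choose_eq_zero_of_lt (by omega)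
              have h3 : N - (j+1) = 0 := by omega
              have h4 : N + 1 - (j+1) = 0 := by omega
              rw [h1, h3, h4, poch_zero]
              push_cast; ring
      rw [Finset.sum_congr rfl key, Finset.sum_add_distrib, ← Finset.sum_mul,
        Finset.sum_range_succ (n := N + 1), Nat.choose_succ_self]
      simp only [Nat.cast_zero, mul_zero, zero_mul, add_zero]
      rw [ih b c]
      have hT1 : ∑ m ∈ Finset.range (N + 2),
          (if m = 0 then 0 else
            (-1) ^ m * (N.choose (m-1) : ℂ) * poch b m * poch (c + m) (N + 1 - m))
          = -b * poch (c - b) N := by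
        rw [Finset.sum_range_succ' (n := N + 1)]
        simp only [Nat.add_sub_cancel]
        have e : ∀ j ∈ Finset.range (N + 1),
            (if j + 1 = 0 then (0:ℂ) else
              (-1) ^ (j+1) * (N.choose j : ℂ) * poch b (j+1) * poch (c + ((j+1:ℕ):ℂ)) (N + 1 - (j+1)))
            = -b * ((-1) ^ j * (N.choose j : ℂ) * poch (b+1) j * poch ((c+1) + j) (N - j)) := by
          intro j hj
          rw [if_neg (Nat.succ_ne_zero j), poch_succ_left,
            show N + 1 - (j+1) = N - j from by omega,
            show c + (((j+1):ℕ):ℂ) = (c+1) + j from by push_cast; ring]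
          ring
        rw [Finset.sum_congr rfl e, ← Finset.mul_sum, ih (b+1) (c+1)]
        simp only [reduceIte]
        ring_nf
      rw [hT1, poch_succ]
      ring

lemma tri_swap (n : ℕ) (F : ℕ → ℕ → ℂ) :
    ∑ m ∈ Finset.range (n + 1), ∑ j ∈ Finset.range (m + 1), F m j
      = ∑ j ∈ Finset.range (n + 1), ∑ i ∈ Finset.range (n - j + 1), F (j + i) j := by
  rw [Finset.sum_sigma', Finset.sum_sigma']
  refine Finset.sum_nbij' (fun q => ⟨q.2, q.1 - q.2⟩) (fun q => ⟨q.1 + q.2, q.1⟩) ?_ ?_ ?_ ?_ ?_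
  · rintro ⟨m, j⟩ hq
    simp only [Finset.mem_sigma, Finset.mem_range] at *
    omega
  · rintro ⟨j, i⟩ hq
    simp only [Finset.mem_sigma, Finset.mem_range] at *
    omega
  · rintro ⟨m, j⟩ hq
    simp only [Finset.mem_sigma, Finset.mem_range] at hq
    simp only [Sigma.mk.inj_iff]
    constructor
    · omega
    · exact heq_of_eq (by omega)
  · rintro ⟨j, i⟩ hq
    simp only [Finset.mem_sigma, Finset.mem_range] at hq
    simp only [Sigma.mk.inj_iff, true_and]
    exact heq_of_eq (by omega)
  · rintro ⟨m, j⟩ hq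
    simp only [Finset.mem_sigma, Finset.mem_range] at hq
    simp only
    congr 2
    omega

lemma neg_one_sq_pow (j : ℕ) : ((-1:ℂ)) ^ j * (-1) ^ j = 1 := by
  rw [← pow_add, ← two_mul, pow_mul]; norm_num

lemma saalschutz (N : ℕ) (A B C : ℂ) :
    ∑ m ∈ Finset.range (N + 1), (-1) ^ m * (N.choose m : ℂ) * poch A m * poch B m *
        poch (C + m) (N - m) * poch ((A + B - C - N + 1) + m) (N - m)
      = (-1) ^ N * poch (C - A) N * poch (C - B) N := by
  set D : ℂ := A + B - C - N + 1 with hD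
  have step1 : ∀ m ∈ Finset.range (N + 1),
      (-1) ^ m * (N.choose m : ℂ) * poch A m * poch B m *
        poch (C + m) (N - m) * poch (D + m) (N - m)
      = ∑ j ∈ Finset.range (m + 1),
          ((-1) ^ m * (-1) ^ j * (N.choose m : ℂ) * (m.choose j : ℂ) * poch A m *
            poch (D - B) j * poch (D + j) (N - j) * poch (C + m) (N - m)) := by
    intro m hm
    simp only [Finset.mem_range] at hm
    have hv : poch B m = ∑ j ∈ Finset.range (m + 1),
        (-1) ^ j * (m.choose j : ℂ) * poch (D - B) j * poch (D + j) (m - j) := by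
      rw [vandermonde m (D - B) D, show D - (D - B) = B by ring]
    rw [hv, Finset.mul_sum, Finset.sum_mul, Finset.sum_mul]
    refine Finset.sum_congr rfl fun j hj => ?_
    simp only [Finset.mem_range] at hj
    have hjm : j ≤ m := by omega
    have hsplit : poch (D + j) (N - j) = poch (D + j) (m - j) * poch (D + m) (N - m) := by
      rw [show N - j = (m - j) + (N - m) from by omega, poch_add,
        show D + j + ((m - j : ℕ) : ℂ) = D + m from by push_cast [Nat.cast_sub hjm]; ring]
    rw [hsplit]; ring
  rw [Finset.sum_congr rfl step1, tri_swap]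
  have step2 : ∀ j ∈ Finset.range (N + 1),
      (∑ i ∈ Finset.range (N - j + 1),
        ((-1) ^ (j + i) * (-1) ^ j * (N.choose (j + i) : ℂ) * ((j + i).choose j : ℂ) *
          poch A (j + i) * poch (D - B) j * poch (D + j) (N - j) * poch (C + ((j + i : ℕ) : ℂ)) (N - (j + i))))
      = ((-1) ^ N * poch (D - B) N) *
          ((-1) ^ j * (N.choose j : ℂ) * poch A j * poch (D + j) (N - j)) := by
    intro j hj
    simp only [Finset.mem_range] at hj
    have hjN : j ≤ N := by omega
    have inner : ∀ i ∈ Finset.range (N - j + 1),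
        ((-1) ^ (j + i) * (-1) ^ j * (N.choose (j + i) : ℂ) * ((j + i).choose j : ℂ) *
          poch A (j + i) * poch (D - B) j * poch (D + j) (N - j) * poch (C + ((j + i : ℕ) : ℂ)) (N - (j + i)))
        = ((N.choose j : ℂ) * poch A j * poch (D - B) j * poch (D + j) (N - j)) *
            ((-1) ^ i * (((N - j).choose i : ℕ) : ℂ) * poch (A + j) i *
              poch ((C + j) + i) ((N - j) - i)) := by
      intro i hi
      simp only [Finset.mem_range] at hi
      have hiN : j + i ≤ N := by omega
      have hchoose : (N.choose (j + i) : ℂ) * ((j + i).choose j : ℂ)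
          = (N.choose j : ℂ) * (((N - j).choose i : ℕ) : ℂ) := by
        rw [← Nat.cast_mul, ← Nat.cast_mul, Nat.choose_mul (Nat.le_add_right j i),
          Nat.add_sub_cancel_left]
      have hC : poch (C + ((j + i : ℕ) : ℂ)) (N - (j + i)) = poch ((C + j) + i) ((N - j) - i) := by
        rw [show (((j + i : ℕ)) : ℂ) = (j : ℂ) + i from by push_cast; ring,
          show C + ((j : ℂ) + i) = (C + j) + i by ring,
          show N - (j + i) = (N - j) - i from by omega]
      calc ((-1:ℂ)) ^ (j + i) * (-1) ^ j * (N.choose (j + i) : ℂ) * ((j + i).choose j : ℂ) *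
            poch A (j + i) * poch (D - B) j * poch (D + j) (N - j) * poch (C + ((j + i : ℕ):ℂ)) (N - (j + i))
          = ((-1) ^ j * (-1) ^ j) * (-1) ^ i * ((N.choose (j + i) : ℂ) * ((j + i).choose j : ℂ)) *
            (poch A j * poch (A + j) i) * poch (D - B) j * poch (D + j) (N - j) *
            poch ((C + j) + i) ((N - j) - i) := by
            rw [hC, poch_add A j i, pow_add]; ring
        _ = _ := by rw [neg_one_sq_pow, hchoose]; ring
    rw [Finset.sum_congr rfl inner, ← Finset.mul_sum, vandermonde (N - j) (A + j) (C + j),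
      show C + (j:ℂ) - (A + j) = C - A by ring]
    have hrefl : poch (C - A) (N - j) = (-1) ^ (N - j) * poch ((D - B) + j) (N - j) := by
      rw [poch_reflect (C - A) (N - j),
        show 1 - (C - A) - ((N - j : ℕ) : ℂ) = (D - B) + j from by
          push_cast [Nat.cast_sub hjN]; ring]
    have hsgn : ((-1:ℂ)) ^ (N - j) = (-1) ^ N * (-1) ^ j := by
      calc ((-1:ℂ)) ^ (N - j) = (-1) ^ (N - j) * ((-1) ^ j * (-1) ^ j) := by
            rw [neg_one_sq_pow, mul_one]
        _ = ((-1) ^ (N - j) * (-1) ^ j) * (-1) ^ j := by ring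
        _ = (-1) ^ N * (-1) ^ j := by rw [← pow_add, show N - j + j = N from by omega]
    have hDB : poch (D - B) j * poch ((D - B) + j) (N - j) = poch (D - B) N := by
      rw [← poch_add, show j + (N - j) = N from by omega]
    rw [hrefl, hsgn]
    calc (N.choose j : ℂ) * poch A j * poch (D - B) j * poch (D + j) (N - j) *
          ((-1) ^ N * (-1) ^ j * poch ((D - B) + j) (N - j))
        = ((-1) ^ N * (poch (D - B) j * poch ((D - B) + j) (N - j))) *
            ((-1) ^ j * (N.choose j : ℂ) * poch A j * poch (D + j) (N - j)) := by ring
      _ = _ := by rw [hDB]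
  rw [Finset.sum_congr rfl step2, ← Finset.mul_sum, vandermonde N A D]
  have h1 : poch (D - B) N = (-1) ^ N * poch (C - A) N := by
    rw [poch_reflect (D - B) N, show 1 - (D - B) - (N:ℂ) = C - A from by rw [hD]; ring]
  have h2 : poch (D - A) N = (-1) ^ N * poch (C - B) N := by
    rw [poch_reflect (D - A) N, show 1 - (D - A) - (N:ℂ) = C - B from by rw [hD]; ring]
  rw [h1, h2]
  calc (-1:ℂ) ^ N * ((-1) ^ N * poch (C - A) N) * ((-1) ^ N * poch (C - B) N)
      = ((-1) ^ N * (-1) ^ N) * ((-1) ^ N * poch (C - A) N * poch (C - B) N) := by ring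
    _ = _ := by rw [neg_one_sq_pow]; ring

lemma pID (K : ℕ) (a b c p : ℂ) :
    ∑ m ∈ Finset.range (K + 1),
      ((-1) ^ m * (K.choose m : ℂ) * poch (a + K) m * poch (a - b - c) m *
        poch ((1 + a - b) + m) (K - m) * poch ((1 + a - c) + m) (K - m) *
        (p * (a - p) * (b + c - a) + m * (b * c - p * (a - p))))
    = (b + c - a) * poch b K * poch c K * (p + K) * (a - p + K) := by
  set α : ℂ := p * (a - p) * (b + c - a) with hα
  set β : ℂ := b * c - p * (a - p) with hβ
  set w : ℂ := a - b - c with hw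
  -- split the summand
  have hsplit : ∀ m ∈ Finset.range (K + 1),
      ((-1) ^ m * (K.choose m : ℂ) * poch (a + K) m * poch w m *
        poch ((1 + a - b) + m) (K - m) * poch ((1 + a - c) + m) (K - m) * (α + m * β))
      = α * ((-1) ^ m * (K.choose m : ℂ) * poch (a + K) m * poch (w + 1) m *
          poch ((1 + a - b) + m) (K - m) * poch ((1 + a - c) + m) (K - m))
        + (w * β - α) * ((m : ℂ) * ((-1) ^ m * (K.choose m : ℂ) * poch (a + K) m *
            poch (w + 1) (m - 1) *
            poch ((1 + a - b) + m) (K - m) * poch ((1 + a - c) + m) (K - m))) := by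
    intro m hm
    match m with
    | 0 => simp only [Nat.cast_zero, zero_mul, add_zero, pow_zero, one_mul, poch_zero]; ring
    | (j + 1) =>
        rw [poch_succ_left w j, poch_succ (w + 1) j, Nat.add_sub_cancel]
        push_cast
        ring
  rw [Finset.sum_congr rfl hsplit, Finset.sum_add_distrib, ← Finset.mul_sum, ← Finset.mul_sum]
  -- first sum via Saalschuetz
  have hSA : ∑ m ∈ Finset.range (K + 1),
      ((-1) ^ m * (K.choose m : ℂ) * poch (a + K) m * poch (w + 1) m *
        poch ((1 + a - b) + m) (K - m) * poch ((1 + a - c) + m) (K - m))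
      = poch b K * poch c K := by
    have h := saalschutz K (a + K) (w + 1) (1 + a - b)
    rw [show (a + (K:ℂ)) + (w + 1) - (1 + a - b) - (K:ℂ) + 1 = 1 + a - c from by
        rw [hw]; ring] at h
    rw [h, show (1 + a - b) - (a + (K:ℂ)) = 1 - b - K by ring,
      show (1 + a - b) - (w + 1) = c from by rw [hw]; ring,
      ← poch_reflect b K]
  rw [hSA]
  -- second sum
  rcases K with _ | M
  · rw [Finset.sum_range_one]
    simp only [Nat.cast_zero, zero_mul, mul_zero, add_zero, poch_zero]
    push_cast; ring
  · have hSB : ∑ m ∈ Finset.range (M + 1 + 1),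
        ((m : ℂ) * ((-1) ^ m * ((M + 1).choose m : ℂ) * poch (a + (M + 1 : ℕ)) m *
          poch (w + 1) (m - 1) *
          poch ((1 + a - b) + m) ((M + 1) - m) * poch ((1 + a - c) + m) ((M + 1) - m)))
        = -(((M : ℂ) + 1) * (a + ((M : ℂ) + 1)) * (poch (b + 1) M * poch (c + 1) M)) := by
      rw [Finset.sum_range_succ']
      simp only [Nat.cast_zero, zero_mul, add_zero]
      have e : ∀ j ∈ Finset.range (M + 1),
          (((j + 1 : ℕ) : ℂ) * ((-1) ^ (j + 1) * ((M + 1).choose (j + 1) : ℂ) *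
            poch (a + (M + 1 : ℕ)) (j + 1) * poch (w + 1) ((j + 1) - 1) *
            poch ((1 + a - b) + ((j + 1 : ℕ) : ℂ)) ((M + 1) - (j + 1)) *
            poch ((1 + a - c) + ((j + 1 : ℕ) : ℂ)) ((M + 1) - (j + 1))))
          = (-(((M : ℂ) + 1) * (a + ((M : ℂ) + 1)))) *
              ((-1) ^ j * (M.choose j : ℂ) * poch (a + (M + 1 : ℕ) + 1) j * poch (w + 1) j *
                poch ((2 + a - b) + j) (M - j) * poch ((2 + a - c) + j) (M - j)) := by
        intro j hj
        have hch : ((j : ℂ) + 1) * ((M + 1).choose (j + 1) : ℂ) = ((M : ℂ) + 1) * (M.choose j : ℂ) := by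
          have h0 : M.succ * M.choose j = (M.succ).choose j.succ * j.succ := Nat.add_one_mul_choose_eq M j
          have h1 := congrArg (Nat.cast : ℕ → ℂ) h0
          push_cast at h1
          linear_combination -h1
        rw [Nat.add_sub_cancel, poch_succ_left (a + ((M + 1 : ℕ) : ℂ)) j,
          show (M + 1) - (j + 1) = M - j from by omega,
          show (1 + a - b) + (((j + 1 : ℕ)) : ℂ) = (2 + a - b) + j from by push_cast; ring,
          show (1 + a - c) + (((j + 1 : ℕ)) : ℂ) = (2 + a - c) + j from by push_cast; ring,
          pow_succ]
        push_cast
        linear_combination ((-1:ℂ)) ^ j * (-1) * (a + ((M:ℂ) + 1)) * poch (a + ((M:ℂ) + 1) + 1) j *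
          poch (w + 1) j * poch ((2 + a - b) + j) (M - j) * poch ((2 + a - c) + j) (M - j) * hch
      rw [Finset.sum_congr rfl e, ← Finset.mul_sum]
      have h := saalschutz M (a + ((M + 1 : ℕ) : ℂ) + 1) (w + 1) (2 + a - b)
      rw [show (a + ((M + 1 : ℕ):ℂ) + 1) + (w + 1) - (2 + a - b) - (M:ℂ) + 1 = 2 + a - c from by
          rw [hw]; push_cast; ring] at h
      rw [h, show (2 + a - b) - (a + ((M + 1 : ℕ):ℂ) + 1) = 1 - (b + 1) - M from by push_cast; ring,
        show (2 + a - b) - (w + 1) = c + 1 from by rw [hw]; ring]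
      rw [show ((-1:ℂ)) ^ M * poch (1 - (b + 1) - M) M * poch (c + 1) M
          = ((-1) ^ M * poch (1 - (b + 1) - (M:ℂ)) M) * poch (c + 1) M from by ring,
        ← poch_reflect (b + 1) M]
      push_cast; ring
    rw [hSB, poch_succ_left b M, poch_succ_left c M]
    push_cast; ring

lemma coeffID (n K r s : ℕ) (hKn : K ≤ n) (a b c p γ x : ℂ) (A : Fin r → ℂ) (B : Fin s → ℂ)
    (hbc : b * c - p * (a - p) ≠ 0)
    (hγ : γ = p * (a - p) * (b + c - a) / (b * c - p * (a - p)))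
    (hγ0 : 0 < K → γ ≠ 0) (hp0 : 0 < K → p ≠ 0) (hap0 : 0 < K → a - p ≠ 0)
    (hab : poch (1 + a - b) K ≠ 0) (hac : poch (1 + a - c) K ≠ 0)
    (hpK : poch p K ≠ 0) (hapK : poch (a - p) K ≠ 0)
    (hgam : ∀ m, m ≤ K → poch γ m ≠ 0)
    (hBne : ∀ i : Fin s, ∀ m k : ℕ, m + k ≤ n → poch (B i + (m : ℂ)) k ≠ 0) :
    (poch a K * (poch b K * (poch c K * (poch (a - p + 1) K * (poch (p + 1) K * 1)))) *
        ∏ i : Fin r, poch (A i) K) * poch (-(n : ℂ)) K /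
      ((K.factorial : ℂ) * (poch (1 + a - b) K * (poch (1 + a - c) K *
        (poch p K * (poch (a - p) K * 1))) * ∏ i : Fin s, poch (B i) K)) * x ^ K
    = ∑ m ∈ Finset.range (K + 1),
        (poch (a / 2) m * poch ((a + 1) / 2) m * poch (a - b - c) m * poch (γ + 1) m *
            ∏ i : Fin r, poch (A i) m) * poch (-(n : ℂ)) m * (-4) ^ m /
          ((m.factorial : ℂ) * poch (1 + a - b) m * poch (1 + a - c) m * poch γ m *
            ∏ i : Fin s, poch (B i) m) *
        ((poch (a + 2 * (m : ℂ)) (K - m) * ∏ i : Fin r, poch (A i + (m : ℂ)) (K - m)) *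
            poch (-((n - m : ℕ) : ℂ)) (K - m) /
          (((K - m).factorial : ℂ) * ∏ i : Fin s, poch (B i + (m : ℂ)) (K - m))) * x ^ K := by
  rcases Nat.eq_zero_or_pos K with rfl | hKpos
  · simp [poch_zero]
  have hγne : γ ≠ 0 := hγ0 hKpos
  have hpne : p ≠ 0 := hp0 hKpos
  have hapne : a - p ≠ 0 := hap0 hKpos
  have hbca : b + c - a ≠ 0 := by
    intro h; exact hγne (by rw [hγ, h, mul_zero, zero_div])
  have hγβ : γ * (b * c - p * (a - p)) = p * (a - p) * (b + c - a) := by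
    rw [hγ]; field_simp
  have hPBK : (∏ i : Fin s, poch (B i) K) ≠ 0 := by
    refine Finset.prod_ne_zero_iff.mpr fun i _ => ?_
    have := hBne i 0 K (by omega)
    simpa using this
  have hKfac : ((K.factorial : ℕ) : ℂ) ≠ 0 := by
    exact_mod_cast K.factorial_ne_zero
  -- per-term rewrite
  have hterm : ∀ m ∈ Finset.range (K + 1),
      (poch (a / 2) m * poch ((a + 1) / 2) m * poch (a - b - c) m * poch (γ + 1) m *
          ∏ i : Fin r, poch (A i) m) * poch (-(n : ℂ)) m * (-4) ^ m /
        ((m.factorial : ℂ) * poch (1 + a - b) m * poch (1 + a - c) m * poch γ m *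
          ∏ i : Fin s, poch (B i) m) *
        ((poch (a + 2 * (m : ℂ)) (K - m) * ∏ i : Fin r, poch (A i + (m : ℂ)) (K - m)) *
            poch (-((n - m : ℕ) : ℂ)) (K - m) /
          (((K - m).factorial : ℂ) * ∏ i : Fin s, poch (B i + (m : ℂ)) (K - m))) * x ^ K
      = (poch a K * (∏ i : Fin r, poch (A i) K) * poch (-(n : ℂ)) K * x ^ K /
          ((K.factorial : ℂ) * (∏ i : Fin s, poch (B i) K) * γ *
            poch (1 + a - b) K * poch (1 + a - c) K)) *
        ((-1) ^ m * (K.choose m : ℂ) * poch (a + K) m * poch (a - b - c) m *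
          poch ((1 + a - b) + m) (K - m) * poch ((1 + a - c) + m) (K - m) * (γ + m)) := by
    intro m hm
    simp only [Finset.mem_range] at hm
    have hmK : m ≤ K := by omega
    have hmn : m ≤ n := le_trans hmK hKn
    have hmfac : ((m.factorial : ℕ) : ℂ) ≠ 0 := by exact_mod_cast m.factorial_ne_zero
    have hKmfac : (((K - m).factorial : ℕ) : ℂ) ≠ 0 := by
      exact_mod_cast (K - m).factorial_ne_zero
    have habm : poch (1 + a - b) m ≠ 0 := by
      intro h0; apply hab
      rw [show K = m + (K - m) from by omega, poch_add, h0, zero_mul]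
    have hacm : poch (1 + a - c) m ≠ 0 := by
      intro h0; apply hac
      rw [show K = m + (K - m) from by omega, poch_add, h0, zero_mul]
    have hgm : poch γ m ≠ 0 := hgam m hmK
    have hPBm : (∏ i : Fin s, poch (B i) m) ≠ 0 := by
      refine Finset.prod_ne_zero_iff.mpr fun i _ => ?_
      have := hBne i 0 m (by omega)
      simpa using this
    have hPBm2 : (∏ i : Fin s, poch (B i + (m : ℂ)) (K - m)) ≠ 0 :=
      Finset.prod_ne_zero_iff.mpr fun i _ => hBne i m (K - m) (by omega)
    -- small fraction identities
    have q1 : poch (γ + 1) m / poch γ m = (γ + m) / γ := by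
      rw [div_eq_div_iff hgm hγne]
      linear_combination poch_contig γ m
    have q2 : poch (a / 2) m * poch ((a + 1) / 2) m * ((-4 : ℂ)) ^ m * poch (a + 2 * (m : ℂ)) (K - m)
        = (-1) ^ m * (poch a K * poch (a + (K : ℂ)) m) := by
      have h2 : poch a (2 * m + (K - m)) = poch a (2 * m) * poch (a + ((2 * m : ℕ) : ℂ)) (K - m) :=
        poch_add a (2 * m) (K - m)
      rw [show 2 * m + (K - m) = K + m from by omega] at h2
      have h1 : poch a (K + m) = poch a K * poch (a + (K : ℂ)) m := poch_add a K m
      have e9 : ((-4 : ℂ)) ^ m = (-1) ^ m * 4 ^ m := by rw [← mul_pow]; norm_num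
      rw [e9, ← h1, h2, ← poch_doubling a m,
        show ((2 * m : ℕ) : ℂ) = 2 * (m : ℂ) from by push_cast; ring]
      ring
    have q3 : (1 : ℂ) / ((m.factorial : ℂ) * ((K - m).factorial : ℂ))
        = (K.choose m : ℂ) / (K.factorial : ℂ) := by
      rw [div_eq_div_iff (by exact mul_ne_zero hmfac hKmfac) hKfac]
      have := Nat.choose_mul_factorial_mul_factorial hmK
      have h := congrArg (Nat.cast : ℕ → ℂ) this
      push_cast at h
      linear_combination -h
    have q4 : poch (-(n : ℂ)) m * poch (-((n - m : ℕ) : ℂ)) (K - m) = poch (-(n : ℂ)) K := by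
      have h := poch_add (-(n : ℂ)) m (K - m)
      rw [show m + (K - m) = K from by omega] at h
      rw [h, show -(n : ℂ) + m = -((n - m : ℕ) : ℂ) from by push_cast [Nat.cast_sub hmn]; ring]
    have q5 : (∏ i : Fin r, poch (A i) m) * (∏ i : Fin r, poch (A i + (m : ℂ)) (K - m))
        = ∏ i : Fin r, poch (A i) K := by
      rw [← Finset.prod_mul_distrib]
      refine Finset.prod_congr rfl fun i _ => ?_
      rw [← poch_add, show m + (K - m) = K from by omega]
    have q6 : (∏ i : Fin s, poch (B i) m) * (∏ i : Fin s, poch (B i + (m : ℂ)) (K - m))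
        = ∏ i : Fin s, poch (B i) K := by
      rw [← Finset.prod_mul_distrib]
      refine Finset.prod_congr rfl fun i _ => ?_
      rw [← poch_add, show m + (K - m) = K from by omega]
    have q7 : (1 : ℂ) / poch (1 + a - b) m
        = poch ((1 + a - b) + m) (K - m) / poch (1 + a - b) K := by
      rw [div_eq_div_iff habm hab, show K = m + (K - m) from by omega, poch_add,
        show m + (K - m) - m = K - m from by omega]
      ring
    have q8 : (1 : ℂ) / poch (1 + a - c) m
        = poch ((1 + a - c) + m) (K - m) / poch (1 + a - c) K := by
      rw [div_eq_div_iff hacm hac, show K = m + (K - m) from by omega, poch_add,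
        show m + (K - m) - m = K - m from by omega]
      ring
    calc (poch (a / 2) m * poch ((a + 1) / 2) m * poch (a - b - c) m * poch (γ + 1) m *
          ∏ i : Fin r, poch (A i) m) * poch (-(n : ℂ)) m * (-4) ^ m /
          ((m.factorial : ℂ) * poch (1 + a - b) m * poch (1 + a - c) m * poch γ m *
            ∏ i : Fin s, poch (B i) m) *
          ((poch (a + 2 * (m : ℂ)) (K - m) * ∏ i : Fin r, poch (A i + (m : ℂ)) (K - m)) *
              poch (-((n - m : ℕ) : ℂ)) (K - m) /
            (((K - m).factorial : ℂ) * ∏ i : Fin s, poch (B i + (m : ℂ)) (K - m))) * x ^ K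
        = (poch (a / 2) m * poch ((a + 1) / 2) m * ((-4 : ℂ)) ^ m * poch (a + 2 * (m : ℂ)) (K - m)) *
            (poch (γ + 1) m / poch γ m) *
            (poch (-(n : ℂ)) m * poch (-((n - m : ℕ) : ℂ)) (K - m)) *
            ((∏ i : Fin r, poch (A i) m) * (∏ i : Fin r, poch (A i + (m : ℂ)) (K - m))) *
            ((1 : ℂ) / ((m.factorial : ℂ) * ((K - m).factorial : ℂ))) *
            ((1 : ℂ) / poch (1 + a - b) m) * ((1 : ℂ) / poch (1 + a - c) m) *
            (1 / ((∏ i : Fin s, poch (B i) m) * (∏ i : Fin s, poch (B i + (m : ℂ)) (K - m)))) *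
            (poch (a - b - c) m * x ^ K) := by
          ring
      _ = ((-1) ^ m * (poch a K * poch (a + (K : ℂ)) m)) * ((γ + m) / γ) * poch (-(n : ℂ)) K *
            (∏ i : Fin r, poch (A i) K) * ((K.choose m : ℂ) / (K.factorial : ℂ)) *
            (poch ((1 + a - b) + m) (K - m) / poch (1 + a - b) K) *
            (poch ((1 + a - c) + m) (K - m) / poch (1 + a - c) K) *
            (1 / (∏ i : Fin s, poch (B i) K)) * (poch (a - b - c) m * x ^ K) := by
          rw [q1, q2, q3, q4, q5, q6, q7, q8]
      _ = _ := by
          ring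
  rw [Finset.sum_congr rfl hterm, ← Finset.mul_sum]
  -- evaluate the sum via pID
  have hsum : ∑ m ∈ Finset.range (K + 1),
      ((-1) ^ m * (K.choose m : ℂ) * poch (a + K) m * poch (a - b - c) m *
        poch ((1 + a - b) + m) (K - m) * poch ((1 + a - c) + m) (K - m) * (γ + m))
      = (b + c - a) * poch b K * poch c K * (p + K) * (a - p + K) / (b * c - p * (a - p)) := by
    rw [eq_div_iff hbc, Finset.sum_mul, ← pID K a b c p]
    refine Finset.sum_congr rfl fun m hm => ?_
    linear_combination ((-1) ^ m * (K.choose m : ℂ) * poch (a + K) m * poch (a - b - c) m *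
      poch ((1 + a - b) + m) (K - m) * poch ((1 + a - c) + m) (K - m)) * hγβ
  rw [hsum]
  have cp : p * poch (p + 1) K = poch p K * (p + (K:ℂ)) := poch_contig p K
  have cap : (a - p) * poch (a - p + 1) K = poch (a - p) K * (a - p + (K:ℂ)) := poch_contig (a - p) K
  have key : poch (a - p + 1) K * poch (p + 1) K / (poch p K * poch (a - p) K)
      = (b + c - a) * (p + (K:ℂ)) * (a - p + (K:ℂ)) / γ / (b * c - p * (a - p)) := by
    rw [div_div, div_eq_div_iff (mul_ne_zero hpK hapK) (mul_ne_zero hγne hbc)]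
    linear_combination poch (a - p + 1) K * poch (p + 1) K * hγβ
      + (b + c - a) * (a - p) * poch (a - p + 1) K * cp
      + (b + c - a) * poch p K * (p + (K:ℂ)) * cap
  calc (poch a K * (poch b K * (poch c K * (poch (a - p + 1) K * (poch (p + 1) K * 1)))) *
        ∏ i : Fin r, poch (A i) K) * poch (-(n : ℂ)) K /
      ((K.factorial : ℂ) * (poch (1 + a - b) K * (poch (1 + a - c) K *
        (poch p K * (poch (a - p) K * 1))) * ∏ i : Fin s, poch (B i) K)) * x ^ K
      = (poch a K * poch b K * poch c K * (∏ i : Fin r, poch (A i) K) * poch (-(n : ℂ)) K * x ^ K /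
          ((K.factorial : ℂ) * poch (1 + a - b) K * poch (1 + a - c) K *
            ∏ i : Fin s, poch (B i) K)) *
          (poch (a - p + 1) K * poch (p + 1) K / (poch p K * poch (a - p) K)) := by
        ring
    _ = _ := by
        rw [key]
        ring

theorem proposition_11P1 (n r s : ℕ) (a b c p x : ℂ) (A : Fin r → ℂ) (B : Fin s → ℂ)
    (hbc : b * c - p * (a - p) ≠ 0) (γ : ℂ)
    (hγ : γ = p * (a - p) * (b + c - a) / (b * c - p * (a - p)))
    (hnd : ∀ z ∈ [1 + a - b, 1 + a - c, p, a - p, γ], ∀ k ≤ n, poch z k ≠ 0)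
    (hB : ∀ i : Fin s, ∀ m k : ℕ, m + k ≤ n → poch (B i + (m : ℂ)) k ≠ 0) :
    hypTerm ([a, b, c, a - p + 1, p + 1] ++ List.ofFn A)
        ([1 + a - b, 1 + a - c, p, a - p] ++ List.ofFn B) n x
      = ∑ m ∈ Finset.range (n + 1),
          (poch (a / 2) m * poch ((a + 1) / 2) m * poch (a - b - c) m * poch (γ + 1) m *
              (List.ofFn fun i => poch (A i) m).prod * poch (-(n : ℂ)) m * (-4 * x) ^ m) /
            ((m.factorial : ℂ) * poch (1 + a - b) m * poch (1 + a - c) m * poch γ m *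
              (List.ofFn fun i => poch (B i) m).prod) *
          hypTerm ((a + 2 * (m : ℂ)) :: List.ofFn (fun i => A i + (m : ℂ)))
            (List.ofFn (fun i => B i + (m : ℂ))) (n - m) x := by
  unfold hypTerm
  simp only [List.map_append, List.map_cons, List.map_nil, List.map_ofFn,
    List.prod_append, List.prod_cons, List.prod_nil, List.prod_ofFn, Function.comp]
  have hR : ∀ m ∈ Finset.range (n + 1),
      ((poch (a / 2) m * poch ((a + 1) / 2) m * poch (a - b - c) m * poch (γ + 1) m *
          ∏ i : Fin r, poch (A i) m) * poch (-(n : ℂ)) m * (-4 * x) ^ m /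
        ((m.factorial : ℂ) * poch (1 + a - b) m * poch (1 + a - c) m * poch γ m *
          ∏ i : Fin s, poch (B i) m)) *
      (∑ k ∈ Finset.range (n - m + 1),
        (poch (a + 2 * (m : ℂ)) k * ∏ i : Fin r, poch (A i + (m : ℂ)) k) *
            poch (-((n - m : ℕ) : ℂ)) k /
          ((k.factorial : ℂ) * ∏ i : Fin s, poch (B i + (m : ℂ)) k) * x ^ k)
      = ∑ k ∈ Finset.range (n - m + 1),
          (poch (a / 2) m * poch ((a + 1) / 2) m * poch (a - b - c) m * poch (γ + 1) m *
              ∏ i : Fin r, poch (A i) m) * poch (-(n : ℂ)) m * (-4) ^ m /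
            ((m.factorial : ℂ) * poch (1 + a - b) m * poch (1 + a - c) m * poch γ m *
              ∏ i : Fin s, poch (B i) m) *
          ((poch (a + 2 * (m : ℂ)) k * ∏ i : Fin r, poch (A i + (m : ℂ)) k) *
              poch (-((n - m : ℕ) : ℂ)) k /
            ((k.factorial : ℂ) * ∏ i : Fin s, poch (B i + (m : ℂ)) k)) * x ^ (m + k) := by
    intro m hm
    rw [Finset.mul_sum]
    refine Finset.sum_congr rfl fun k hk => ?_
    rw [pow_add x m k, show ((-4) * x) ^ m = (-4 : ℂ) ^ m * x ^ m from by rw [← mul_pow]]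
    ring
  rw [Finset.sum_congr rfl hR]
  have hsw : (∑ m ∈ Finset.range (n + 1), ∑ k ∈ Finset.range (n - m + 1),
      (poch (a / 2) m * poch ((a + 1) / 2) m * poch (a - b - c) m * poch (γ + 1) m *
          ∏ i : Fin r, poch (A i) m) * poch (-(n : ℂ)) m * (-4) ^ m /
        ((m.factorial : ℂ) * poch (1 + a - b) m * poch (1 + a - c) m * poch γ m *
          ∏ i : Fin s, poch (B i) m) *
        ((poch (a + 2 * (m : ℂ)) k * ∏ i : Fin r, poch (A i + (m : ℂ)) k) *
            poch (-((n - m : ℕ) : ℂ)) k /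
          ((k.factorial : ℂ) * ∏ i : Fin s, poch (B i + (m : ℂ)) k)) * x ^ (m + k))
      = ∑ K ∈ Finset.range (n + 1), ∑ m ∈ Finset.range (K + 1),
          (poch (a / 2) m * poch ((a + 1) / 2) m * poch (a - b - c) m * poch (γ + 1) m *
              ∏ i : Fin r, poch (A i) m) * poch (-(n : ℂ)) m * (-4) ^ m /
            ((m.factorial : ℂ) * poch (1 + a - b) m * poch (1 + a - c) m * poch γ m *
              ∏ i : Fin s, poch (B i) m) *
          ((poch (a + 2 * (m : ℂ)) (K - m) * ∏ i : Fin r, poch (A i + (m : ℂ)) (K - m)) *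
              poch (-((n - m : ℕ) : ℂ)) (K - m) /
            (((K - m).factorial : ℂ) * ∏ i : Fin s, poch (B i + (m : ℂ)) (K - m))) *
            x ^ (m + (K - m)) := by
    rw [tri_swap n]
    simp only [Nat.add_sub_cancel_left]
  rw [hsw]
  refine Finset.sum_congr rfl fun K hK => ?_
  simp only [Finset.mem_range] at hK
  have hKn : K ≤ n := by omega
  have hmem : ∀ z : ℂ, z ∈ [1 + a - b, 1 + a - c, p, a - p, γ] → ∀ k ≤ n, poch z k ≠ 0 := hnd
  rw [coeffID n K r s hKn a b c p γ x A B hbc hγ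
    (fun hKpos => by have h := hnd γ (by simp) 1 (by omega); rwa [poch_one] at h)
    (fun hKpos => by have h := hnd p (by simp) 1 (by omega); rwa [poch_one] at h)
    (fun hKpos => by have h := hnd (a - p) (by simp) 1 (by omega); rwa [poch_one] at h)
    (hnd (1 + a - b) (by simp) K hKn) (hnd (1 + a - c) (by simp) K hKn)
    (hnd p (by simp) K hKn) (hnd (a - p) (by simp) K hKn)
    (fun m hm => hnd γ (by simp) m (le_trans hm hKn)) hB]
  refine Finset.sum_congr rfl fun m hm => ?_
  simp only [Finset.mem_range] at hm
  rw [show m + (K - m) = K from by omega]
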